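/- arXiv:2507.01150 — 3 statements merged into one kernel-verified Lean document; each statement's English description precedes it below -/
import Mathlib

section
/- Let H be a real Hilbert space and β > 0. The map F : H → H defined by F(x) = x / (1 + β ‖x‖) is monotone: ⟨F(x) − F(y), x − y⟩ ≥ 0 for all x, y ∈ H. -/
open scoped RealInnerProductSpace

/-- The strain-limiting map `F(x) = x/(1 + β‖x‖)` on a real Hilbert space is
monotone. -/
theorem stmt_5 {H : Type*} [NormedAddCommGroup H] [InnerProductSpace ℝ H]
    [CompleteSpace H] (β : ℝ) (hβ : 0 < β) :
    ∀ x y : H,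
      0 ≤ ⟪(1 + β * ‖x‖)⁻¹ • x - (1 + β * ‖y‖)⁻¹ • y, x - y⟫ := by
  intro x y
  set s := ‖x‖ with hs
  set t := ‖y‖ with ht
  have hs0 : (0:ℝ) ≤ s := norm_nonneg x
  have ht0 : (0:ℝ) ≤ t := norm_nonneg y
  have hA : (0:ℝ) < 1 + β * s := by nlinarith
  have hB : (0:ℝ) < 1 + β * t := by nlinarith
  set a := (1 + β * s)⁻¹ with ha
  set b := (1 + β * t)⁻¹ with hb
  have ha0 : 0 < a := inv_pos.2 hA
  have hb0 : 0 < b := inv_pos.2 hB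
  have ha1 : a * (1 + β * s) = 1 := inv_mul_cancel₀ hA.ne'
  have hb1 : b * (1 + β * t) = 1 := inv_mul_cancel₀ hB.ne'
  have hxy : ⟪x, y⟫ ≤ s * t := real_inner_le_norm x y
  have h1 : ⟪a • x - b • y, x - y⟫
      = a * (s * s) + b * (t * t) - (a + b) * ⟪x, y⟫ := by
    simp only [inner_sub_left, inner_sub_right, real_inner_smul_left,
      real_inner_self_eq_norm_mul_norm, real_inner_comm y x]
    ring
  rw [h1]
  nlinarith [mul_nonneg (mul_nonneg ha0.le hb0.le) (sq_nonneg (s - t)),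
    mul_nonneg (add_pos ha0 hb0).le (sub_nonneg.2 hxy)]
end

section
/- Let H be a real Hilbert space and β > 0. The map F(x) = x / (1 + β ‖x‖) on H is injective: F(x) = F(y) implies x = y. -/
/-- The strain-limiting map `F(x) = x/(1 + β‖x‖)` on a real Hilbert space is
injective. -/
theorem stmt_6 {H : Type*} [NormedAddCommGroup H] [InnerProductSpace ℝ H]
    [CompleteSpace H] (β : ℝ) (hβ : 0 < β) :
    Function.Injective (fun x : H => (1 + β * ‖x‖)⁻¹ • x) := by
  intro x y h
  simp only at h
  have hx : (0:ℝ) < 1 + β * ‖x‖ := by positivity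
  have hy : (0:ℝ) < 1 + β * ‖y‖ := by positivity
  have hn : (1 + β * ‖x‖)⁻¹ * ‖x‖ = (1 + β * ‖y‖)⁻¹ * ‖y‖ := by
    have := congrArg norm h
    simpa [norm_smul, Real.norm_eq_abs, abs_of_pos hx, abs_of_pos hy] using this
  have hnorm : ‖x‖ = ‖y‖ := by
    have h2 : ‖x‖ * (1 + β * ‖y‖) = ‖y‖ * (1 + β * ‖x‖) := by
      field_simp at hn
      linarith [hn]
    nlinarith
  rw [hnorm] at h
  exact smul_right_injective H (by positivity) h
end

section
/- Let H be a real Hilbert space and β > 0. The map F(x) = x / (1 + β‖x‖) satisfies the following strengthened monotonicity on bounded sets: for all x, y in the closed ball of radius R, ⟨F(x) − F(y), x − y⟩ ≥ ‖x − y‖² / (1 + βR)². -/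
open scoped RealInnerProductSpace

/-- Local strong monotonicity of `F(x) = x/(1 + β‖x‖)` on bounded sets: for
`x, y` in the closed ball of radius `R`,
`⟪F x − F y, x − y⟫ ≥ ‖x − y‖²/(1 + βR)²`. -/
theorem stmt_17 {H : Type*} [NormedAddCommGroup H] [InnerProductSpace ℝ H]
    [CompleteSpace H] (β R : ℝ) (hβ : 0 < β) :
    ∀ x y : H, ‖x‖ ≤ R → ‖y‖ ≤ R →
      ‖x - y‖ ^ 2 / (1 + β * R) ^ 2 ≤
        ⟪(1 + β * ‖x‖)⁻¹ • x - (1 + β * ‖y‖)⁻¹ • y, x - y⟫ := by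
  intro x y hx hy
  have hR : 0 ≤ R := le_trans (norm_nonneg x) hx
  set a := 1 + β * ‖x‖ with ha
  set b := 1 + β * ‖y‖ with hb
  have ha0 : (0:ℝ) < a := by positivity
  have hb0 : (0:ℝ) < b := by positivity
  have key : ⟪a⁻¹ • x - b⁻¹ • y, x - y⟫
      = a⁻¹ * ‖x - y‖ ^ 2 + (a⁻¹ - b⁻¹) * ⟪y, x - y⟫ := by
    have hdec : a⁻¹ • x - b⁻¹ • y = a⁻¹ • (x - y) + (a⁻¹ - b⁻¹) • y := by
      module
    rw [hdec, inner_add_left, real_inner_smul_left, real_inner_smul_left,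
      real_inner_self_eq_norm_sq]
  rw [key]
  have habs : |a⁻¹ - b⁻¹| ≤ β * ‖x - y‖ / (a * b) := by
    have h1 : a⁻¹ - b⁻¹ = (b - a) / (a * b) := by field_simp
    rw [h1, abs_div, abs_of_pos (by positivity : (0:ℝ) < a * b)]
    gcongr
    have h2 : b - a = β * (‖y‖ - ‖x‖) := by rw [ha, hb]; ring
    rw [h2, abs_mul, abs_of_pos hβ]
    gcongr
    calc |‖y‖ - ‖x‖| ≤ ‖y - x‖ := abs_norm_sub_norm_le y x
      _ = ‖x - y‖ := norm_sub_rev y x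
  have hinner : |⟪y, x - y⟫| ≤ ‖y‖ * ‖x - y‖ := abs_real_inner_le_norm y (x - y)
  have h2 : -(β * ‖x - y‖ / (a * b) * (‖y‖ * ‖x - y‖))
      ≤ (a⁻¹ - b⁻¹) * ⟪y, x - y⟫ := by
    have h3 : |(a⁻¹ - b⁻¹) * ⟪y, x - y⟫| ≤ β * ‖x - y‖ / (a * b) * (‖y‖ * ‖x - y‖) := by
      rw [abs_mul]
      exact mul_le_mul habs hinner (abs_nonneg _) (by positivity)
    linarith [neg_abs_le ((a⁻¹ - b⁻¹) * ⟪y, x - y⟫)]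
  have hmid : ‖x - y‖ ^ 2 / (a * b)
      = a⁻¹ * ‖x - y‖ ^ 2 - β * ‖x - y‖ / (a * b) * (‖y‖ * ‖x - y‖) := by
    rw [ha, hb]
    have hb0' : (0:ℝ) < 1 + β * ‖y‖ := by positivity
    have ha0' : (0:ℝ) < 1 + β * ‖x‖ := by positivity
    field_simp
    ring
  have hab : a * b ≤ (1 + β * R) ^ 2 := by
    have h1 : a ≤ 1 + β * R := by rw [ha]; gcongr
    have h2 : b ≤ 1 + β * R := by rw [hb]; gcongr
    nlinarith
  have hfirst : ‖x - y‖ ^ 2 / (1 + β * R) ^ 2 ≤ ‖x - y‖ ^ 2 / (a * b) :=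
    div_le_div_of_nonneg_left (by positivity) (by positivity) hab
  linarith [hfirst, hmid, h2]
end
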